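/- If b_1, b_2 ∈ k^* lie in distinct cosets of S_λ, then the orbits O(b_1 λ) and O(b_2 λ) under Aut_k(R) are distinct; hence the number of orbits in R − k is at least the index [k^* : S_λ]. -/

import Mathlib

theorem orbits_distinct_of_distinct_cosets
    (k R : Type*) [Field k] [CommRing R] [IsDomain R] [Algebra k R]
    (hinj : Function.Injective (algebraMap k R))
    (lam : R) (hlam : lam ∉ Set.range (algebraMap k R))
    (H : Subgroup kˣ)
    (hH : ∀ a : kˣ, a ∈ H ↔ ∃ σ : R ≃ₐ[k] R, σ lam = algebraMap k R (a : k) * lam) :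
    (∀ b₁ b₂ : kˣ, b₁⁻¹ * b₂ ∉ H →
      (Set.range fun σ : R ≃ₐ[k] R => σ (algebraMap k R (b₁ : k) * lam)) ≠
      (Set.range fun σ : R ≃ₐ[k] R => σ (algebraMap k R (b₂ : k) * lam))) ∧
    (∀ s : Finset R,
      (∀ x : R, x ∉ Set.range (algebraMap k R) → ∃ y ∈ s, ∃ σ : R ≃ₐ[k] R, σ y = x) →
      H.index ≤ s.card) := by
  -- key cancellation lemma
  have key : ∀ (b₁ b₂ : kˣ) (σ : R ≃ₐ[k] R),
      σ (algebraMap k R (b₁ : k) * lam) = algebraMap k R (b₂ : k) * lam →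
      b₁⁻¹ * b₂ ∈ H := by
    intro b₁ b₂ σ hσ
    rw [map_mul, AlgEquiv.commutes] at hσ
    have hb₁ : algebraMap k R (b₁ : k) ≠ 0 := by
      rw [map_ne_zero_iff _ hinj]; exact b₁.ne_zero
    have : σ lam = algebraMap k R ((↑(b₁⁻¹ * b₂) : k)) * lam := by
      apply mul_left_cancel₀ hb₁
      rw [hσ, ← mul_assoc, ← map_mul]
      congr 2
      push_cast
      field_simp
    exact (hH _).mpr ⟨σ, this⟩
  have hb : ∀ b : kˣ, algebraMap k R (b : k) * lam ∉ Set.range (algebraMap k R) := by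
    rintro b ⟨c, hc⟩
    apply hlam
    refine ⟨(↑b⁻¹ : k) * c, ?_⟩
    rw [map_mul, hc, ← mul_assoc, ← map_mul, Units.inv_mul, map_one, one_mul]
  constructor
  · intro b₁ b₂ hmem heq
    apply hmem
    have : algebraMap k R (b₂ : k) * lam ∈
        Set.range fun σ : R ≃ₐ[k] R => σ (algebraMap k R (b₂ : k) * lam) :=
      ⟨AlgEquiv.refl, rfl⟩
    rw [← heq] at this
    obtain ⟨σ, hσ⟩ := this
    exact key b₁ b₂ σ hσ
  · intro s hs
    have h := fun b : kˣ => hs (algebraMap k R (b : k) * lam) (hb b)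
    choose y hy σ hσ using h
    have hinj2 : ∀ b₁ b₂ : kˣ, y b₁ = y b₂ → b₁⁻¹ * b₂ ∈ H := by
      intro b₁ b₂ hyeq
      apply key b₁ b₂ ((σ b₁).symm.trans (σ b₂))
      have h1 : (σ b₁).symm (algebraMap k R (b₁ : k) * lam) = y b₁ := by
        rw [← hσ b₁, AlgEquiv.symm_apply_apply]
      rw [AlgEquiv.trans_apply, h1, hyeq, hσ b₂]
    let g : kˣ ⧸ H → s := fun q => ⟨y (Quotient.out q), hy (Quotient.out q)⟩
    have ginj : Function.Injective g := by
      intro q₁ q₂ hg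
      have := hinj2 (Quotient.out q₁) (Quotient.out q₂) (by simpa [g, Subtype.ext_iff] using hg)
      rw [← QuotientGroup.out_eq' q₁, ← QuotientGroup.out_eq' q₂]
      exact (QuotientGroup.eq).mpr this
    calc H.index = Nat.card (kˣ ⧸ H) := rfl
      _ ≤ Nat.card s := Nat.card_le_card_of_injective g ginj
      _ = s.card := Nat.card_eq_finsetCard s
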